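/- Let D, Δ₁, K_Y be real symmetric positive definite p×p matrices, γ ∈ (0,1), and M₃ a real symmetric positive semidefinite matrix with (D⁻¹ − Δ₁⁻¹ − K_Y⁻¹)·M₃ = 0. Set P = Δ₁⁻¹ + K_Y⁻¹. Then tr( M₃·( ((1−γ)/γ)·P − ((1−γ)/γ²)·P·(D⁻¹ + ((1−γ)/γ)·P)⁻¹·P ) ) = 0. -/

import Mathlib

open Matrix

lemma posdef_smul {p : ℕ} {P : Matrix (Fin p) (Fin p) ℝ} (hP : P.PosDef)
    {c : ℝ} (hc : 0 < c) : (c • P).PosDef := by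
  refine PosDef.of_dotProduct_mulVec_pos ?_ fun x hx => ?_
  · unfold Matrix.IsHermitian
    rw [conjTranspose_smul, hP.1]
    simp
  · rw [smul_mulVec, dotProduct_smul, smul_eq_mul]
    exact mul_pos hc (hP.dotProduct_mulVec_pos hx)

theorem stmt15 (p : ℕ) (D Δ₁ KY M₃ : Matrix (Fin p) (Fin p) ℝ)
    (hD : D.PosDef) (hΔ₁ : Δ₁.PosDef) (hKY : KY.PosDef)
    (hM₃ : M₃.PosSemidef)
    (γ : ℝ) (hγ0 : 0 < γ) (hγ1 : γ < 1)
    (hslack : (D⁻¹ - Δ₁⁻¹ - KY⁻¹) * M₃ = 0)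
    (P : Matrix (Fin p) (Fin p) ℝ) (hP : P = Δ₁⁻¹ + KY⁻¹) :
    (M₃ * (((1 - γ) / γ) • P -
      ((1 - γ) / γ ^ 2) • (P * (D⁻¹ + ((1 - γ) / γ) • P)⁻¹ * P))).trace = 0 := by
  have hc : (0:ℝ) < (1 - γ) / γ := div_pos (by linarith) hγ0
  have hPpd : P.PosDef := hP ▸ (hΔ₁.inv.add hKY.inv)
  have hQ : (D⁻¹ + ((1 - γ) / γ) • P).PosDef := hD.inv.add (posdef_smul hPpd hc)
  set Q := D⁻¹ + ((1 - γ) / γ) • P with hQdef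
  have hQinv : Q⁻¹ * Q = 1 := nonsing_inv_mul Q (isUnit_iff_isUnit_det Q |>.mp hQ.isUnit)
  have hDP : D⁻¹ * M₃ = P * M₃ := by
    have h : D⁻¹ * M₃ - (Δ₁⁻¹ + KY⁻¹) * M₃ = 0 := by
      rw [← hslack, sub_sub, Matrix.sub_mul]
    rw [hP, sub_eq_zero.mp h]
  have hQM : Q * M₃ = γ⁻¹ • (P * M₃) := by
    rw [hQdef, Matrix.add_mul, hDP, Matrix.smul_mul,
      show γ⁻¹ = 1 + (1 - γ) / γ by field_simp; ring, add_smul, one_smul]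
  have hQiPM : Q⁻¹ * (P * M₃) = γ • M₃ := by
    have h2 : P * M₃ = γ • (Q * M₃) := by
      rw [hQM, smul_smul, mul_inv_cancel₀ hγ0.ne', one_smul]
    rw [h2, Matrix.mul_smul, ← Matrix.mul_assoc, hQinv, Matrix.one_mul]
  have hXM : (((1 - γ) / γ) • P -
      ((1 - γ) / γ ^ 2) • (P * Q⁻¹ * P)) * M₃ = 0 := by
    rw [Matrix.sub_mul, Matrix.smul_mul, Matrix.smul_mul, Matrix.mul_assoc,
      Matrix.mul_assoc, hQiPM, Matrix.mul_smul, smul_smul, sub_eq_zero]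
    congr 1
    field_simp
  rw [Matrix.trace_mul_comm, hXM, Matrix.trace_zero]
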